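/- Let n ≥ 1 and let (p_i, R_i), i ∈ Fin n, represent a packing of horospheres: p_i ∈ ℝ², R_i > 0, the pairs (p_i, R_i) are distinct, and ‖p_i − p_j‖² ≥ 4 R_i R_j for all i ≠ j. Suppose the first horosphere has strictly smallest radius: R₁ < R_j for all j ≠ 1. Then the number of indices j ≠ 1 with ‖p₁ − p_j‖² = 4 R₁ R_j (horospheres tangent to the first one) is at most 5. -/

import Mathlib

open Real

private lemma aux_norm_sq (x : EuclideanSpace ℝ (Fin 2)) :
    ‖x‖ ^ 2 = x 0 ^ 2 + x 1 ^ 2 := by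
  rw [EuclideanSpace.norm_eq, Real.sq_sqrt (by positivity)]
  simp [Fin.sum_univ_two, sq_abs]

private lemma aux_ineq {r A B u : ℝ} (hr : 0 < r) (hA : r < A) (hB : r < B)
    (hu : 0 ≤ u) (hu2 : u ^ 2 = 16 * r ^ 2 * (A * B)) :
    2*r*A + 2*r*B - 2*(A*B) < 1/2 * u := by
  have hAB : r ^ 2 < A * B := by
    nlinarith [mul_pos (sub_pos.2 hA) (sub_pos.2 hB), mul_pos hr (sub_pos.2 hA),
      mul_pos hr (sub_pos.2 hB)]
  have h4 : 4 * r ^ 2 < u := by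
    by_contra hcon
    push_neg at hcon
    nlinarith [mul_nonneg (by linarith : (0:ℝ) ≤ 4*r^2 - u)
      (by positivity : (0:ℝ) ≤ 4*r^2 + u),
      mul_pos (mul_pos hr hr) (sub_pos.2 hAB)]
  nlinarith [mul_pos hr (mul_pos (sub_pos.2 hA) (sub_pos.2 hB)),
    mul_pos hr (sub_pos.2 h4)]

private lemma aux_angle {d : ℝ} (hd1 : -(2*π) < d) (hd2 : d < 2*π)
    (hcos : Real.cos d < 1/2) : π/3 < |d| ∧ |d| < 5*π/3 := by
  have hpi := Real.pi_pos
  constructor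
  · by_contra h
    push_neg at h
    have := Real.cos_le_cos_of_nonneg_of_le_pi (abs_nonneg d) (by linarith) h
    rw [Real.cos_pi_div_three, Real.cos_abs] at this
    linarith
  · by_contra h
    push_neg at h
    have h2 : |d| < 2*π := abs_lt.2 ⟨by linarith, hd2⟩
    have he : Real.cos (2*π - |d|) = Real.cos |d| := by
      rw [show 2*π - |d| = -(|d| - 2*π) by ring, Real.cos_neg, Real.cos_sub_two_pi]
    have := Real.cos_le_cos_of_nonneg_of_le_pi (x := 2*π - |d|) (y := π/3)
      (by linarith) (by linarith) (by linarith)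
    rw [Real.cos_pi_div_three, he, Real.cos_abs] at this
    linarith

/-- In a packing of horospheres, the horosphere with strictly smallest
Euclidean radius is tangent to at most 5 other horospheres. -/
theorem smallest_horosphere_at_most_five_tangencies (n : ℕ) (hn : 1 ≤ n)
    (p : Fin n → EuclideanSpace ℝ (Fin 2)) (R : Fin n → ℝ)
    (hR : ∀ i, 0 < R i)
    (hdist : Function.Injective (fun i => (p i, R i)))
    (hsep : ∀ i j, i ≠ j → 4 * R i * R j ≤ ‖p i - p j‖ ^ 2)
    (hmin : ∀ j, j ≠ (⟨0, hn⟩ : Fin n) → R ⟨0, hn⟩ < R j) :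
    Set.ncard {j : Fin n | j ≠ ⟨0, hn⟩ ∧
      ‖p ⟨0, hn⟩ - p j‖ ^ 2 = 4 * R ⟨0, hn⟩ * R j} ≤ 5 := by
  set i0 : Fin n := ⟨0, hn⟩ with hi0
  set S : Set (Fin n) := {j : Fin n | j ≠ i0 ∧
      ‖p i0 - p j‖ ^ 2 = 4 * R i0 * R j} with hSdef
  set x : Fin n → ℝ := fun j => p j 0 - p i0 0 with hx
  set y : Fin n → ℝ := fun j => p j 1 - p i0 1 with hy
  set z : Fin n → ℂ := fun j => ⟨x j, y j⟩ with hz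
  set a : Fin n → ℝ := fun j => (z j).arg with ha
  have hpi := Real.pi_pos
  have hnorm : ∀ j k : Fin n, ‖p j - p k‖ ^ 2 = (x j - x k)^2 + (y j - y k)^2 := by
    intro j k
    rw [aux_norm_sq]
    have h0 : (p j - p k) 0 = p j 0 - p k 0 := rfl
    have h1 : (p j - p k) 1 = p j 1 - p k 1 := rfl
    rw [h0, h1, hx, hy]; ring
  have hzabs : ∀ j ∈ S, ‖z j‖ ^ 2 = 4 * R i0 * R j := by
    intro j hj
    have h2 := hj.2
    rw [hnorm i0 j] at h2
    have : ‖z j‖ ^ 2 = x j ^ 2 + y j ^ 2 := by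
      rw [Complex.sq_norm, Complex.normSq_apply]; ring
    rw [this]
    have hx0 : x i0 = 0 := by simp [hx]
    have hy0 : y i0 = 0 := by simp [hy]
    rw [hx0, hy0] at h2
    nlinarith [h2]
  have hzne : ∀ j ∈ S, z j ≠ 0 := by
    intro j hj h0
    have := hzabs j hj
    rw [h0] at this
    simp at this
    rcases this with h | h
    exacts [absurd h (hR i0).ne', absurd h (hR j).ne']
  -- the pairwise angular separation
  have hpair : ∀ j ∈ S, ∀ k ∈ S, j ≠ k →
      π/3 < |a j - a k| ∧ |a j - a k| < 5*π/3 := by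
    intro j hj k hk hjk
    have hzj := hzabs j hj
    have hzk := hzabs k hk
    have hzj0 := hzne j hj
    have hzk0 := hzne k hk
    have hzjx : x j ^ 2 + y j ^ 2 = 4 * R i0 * R j := by
      rw [← hzj, Complex.sq_norm, Complex.normSq_apply]; ring
    have hzkx : x k ^ 2 + y k ^ 2 = 4 * R i0 * R k := by
      rw [← hzk, Complex.sq_norm, Complex.normSq_apply]; ring
    have hsep' : 4 * R j * R k ≤ (x j - x k)^2 + (y j - y k)^2 := by
      rw [← hnorm]; exact hsep j k hjk
    have habspos : 0 < ‖z j‖ * ‖z k‖ :=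
      mul_pos (norm_pos_iff.2 hzj0) (norm_pos_iff.2 hzk0)
    have hre : ((starRingEnd ℂ) (z j) * z k).re = x j * x k + y j * y k := by
      simp [Complex.mul_re, hz]
    have hu2 : (‖z j‖ * ‖z k‖) ^ 2
        = 16 * (R i0)^2 * (R j * R k) := by
      rw [mul_pow, hzj, hzk]; ring
    have key : ((starRingEnd ℂ) (z j) * z k).re
        < 1/2 * (‖z j‖ * ‖z k‖) := by
      have h1 : ((starRingEnd ℂ) (z j) * z k).re
          ≤ 2 * R i0 * R j + 2 * R i0 * R k - 2 * (R j * R k) := by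
        rw [hre]; nlinarith [hzjx, hzkx, hsep']
      have h2 := aux_ineq (hR i0) (hmin j hj.1) (hmin k hk.1)
        (le_of_lt habspos) hu2
      linarith
    have hcos : Real.cos (a j - a k) < 1/2 := by
      have hmulne : (starRingEnd ℂ) (z j) * z k ≠ 0 :=
        mul_ne_zero (by simpa using hzj0) hzk0
      have hang : ((a k - a j : ℝ) : Real.Angle)
          = (((starRingEnd ℂ) (z j) * z k).arg : Real.Angle) := by
        rw [Complex.arg_mul_coe_angle (by simpa using hzj0) hzk0,
          Complex.arg_conj_coe_angle]
        rw [ha]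
        push_cast [Real.Angle.coe_sub]
        abel
      have hc := congrArg Real.Angle.cos hang
      rw [Real.Angle.cos_coe, Real.Angle.cos_coe] at hc
      rw [show a j - a k = -(a k - a j) by ring, Real.cos_neg, hc,
        Complex.cos_arg hmulne, norm_mul, Complex.norm_conj]
      rw [div_lt_iff₀ habspos]
      linarith
    have hja := Complex.arg_le_pi (z j)
    have hjb := Complex.neg_pi_lt_arg (z j)
    have hka := Complex.arg_le_pi (z k)
    have hkb := Complex.neg_pi_lt_arg (z k)
    exact aux_angle (by simp only [ha]; linarith) (by simp only [ha]; linarith) hcos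
  -- pigeonhole
  by_contra hcon
  push_neg at hcon
  have hfin : S.Finite := Set.toFinite S
  have h6 : 6 ≤ hfin.toFinset.card := by
    rw [← Set.ncard_eq_toFinset_card S hfin]; omega
  have hinj : Set.InjOn a hfin.toFinset := by
    intro j hj k hk hjk
    by_contra hne
    have := (hpair j (hfin.mem_toFinset.1 hj) k (hfin.mem_toFinset.1 hk) hne).1
    rw [hjk] at this
    simp at this
    linarith
  have hAcard : 6 ≤ (hfin.toFinset.image a).card := by
    rw [Finset.card_image_of_injOn hinj]; exact h6
  have hAP : ∀ s ∈ hfin.toFinset.image a, ∀ t ∈ hfin.toFinset.image a, s ≠ t →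
      π/3 < |s - t| ∧ |s - t| < 5*π/3 := by
    intro s hs t ht hst
    obtain ⟨j, hj, rfl⟩ := Finset.mem_image.1 hs
    obtain ⟨k, hk, rfl⟩ := Finset.mem_image.1 ht
    exact hpair j (hfin.mem_toFinset.1 hj) k (hfin.mem_toFinset.1 hk)
      (fun h => hst (by rw [h]))
  obtain ⟨B, hBA, hB6⟩ := Finset.exists_subset_card_eq hAcard
  let e := B.orderIsoOfFin hB6
  set v : Fin 6 → ℝ := fun i => (e i : ℝ) with hv
  have hkey : ∀ i j : Fin 6, i < j → π/3 < v j - v i ∧ v j - v i < 5*π/3 := by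
    intro i j hij
    have hlt : v i < v j := by
      have := e.strictMono hij
      exact this
    have hmem : ∀ i : Fin 6, v i ∈ hfin.toFinset.image a := fun i => hBA (e i).2
    have := hAP (v j) (hmem j) (v i) (hmem i) (ne_of_gt hlt)
    rwa [abs_of_pos (by linarith)] at this
  have g01 := hkey 0 1 (by decide)
  have g12 := hkey 1 2 (by decide)
  have g23 := hkey 2 3 (by decide)
  have g34 := hkey 3 4 (by decide)
  have g45 := hkey 4 5 (by decide)
  have g05 := hkey 0 5 (by decide)
  linarith [g01.1, g12.1, g23.1, g34.1, g45.1, g05.2]
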